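/- Let m be a positive integer. For all integers n ≥ 1, n·ρ(n,m) = Σ_{1 ≤ k ≤ n, gcd(k,m)=1} ρ(n−k,m). -/

import Mathlib

open Equiv Finset
open Fin.NatCast

set_option linter.unusedSectionVars false

namespace RhoAux

attribute [local instance 10] Classical.propDecidable

variable {α β γ : Type*} [Fintype α] [DecidableEq α] [Fintype β] [DecidableEq β]
  [Fintype γ] [DecidableEq γ]

/-- Count of permutations with order coprime to `m`. -/
noncomputable def A (β : Type*) [Fintype β] [DecidableEq β] (m : ℕ) : ℕ :=
  (Finset.univ.filter (fun π : Equiv.Perm β => Nat.Coprime (orderOf π) m)).card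

/-- `permCongr` as a multiplicative equivalence. -/
def permCongrMul (e : β ≃ γ) : Equiv.Perm β ≃* Equiv.Perm γ :=
  { e.permCongr with
    map_mul' := fun f g => by
      ext x
      simp [Equiv.permCongr_apply, Equiv.Perm.mul_apply] }

theorem permCongrMul_apply (e : β ≃ γ) (f : Equiv.Perm β) :
    permCongrMul e f = e.permCongr f := rfl

theorem orderOf_permCongr (e : β ≃ γ) (π : Equiv.Perm β) :
    orderOf (e.permCongr π) = orderOf π := by
  rw [← permCongrMul_apply]
  exact orderOf_injective (permCongrMul e).toMonoidHom (permCongrMul e).injective π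

theorem permCongr_zpow (e : β ≃ γ) (g : Equiv.Perm β) (i : ℤ) :
    (e.permCongr g) ^ i = e.permCongr (g ^ i) := by
  rw [← permCongrMul_apply, ← map_zpow, permCongrMul_apply]

theorem A_congr (e : β ≃ γ) (m : ℕ) : A β m = A γ m := by
  rw [A, A, ← Fintype.card_subtype, ← Fintype.card_subtype]
  exact Fintype.card_congr (Equiv.subtypeEquiv e.permCongr (fun π => by
    rw [orderOf_permCongr]))

theorem pow_finRotate (j : ℕ) (d : ℕ) (p : Fin (j + 1)) :
    (finRotate (j + 1) ^ d) p = p + (d : Fin (j + 1)) := by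
  induction d with
  | zero => simp
  | succ d ih =>
    rw [pow_succ', Equiv.Perm.mul_apply, ih, finRotate_succ_apply, Nat.cast_add, Nat.cast_one,
      add_assoc]

theorem finRotate_isCycleOn (j : ℕ) : (finRotate (j + 1)).IsCycleOn Set.univ := by
  refine ⟨(finRotate (j + 1)).bijective.bijOn_univ, fun p _ q _ => ?_⟩
  refine ⟨(((q - p : Fin (j + 1)) : ℕ) : ℤ), ?_⟩
  rw [zpow_natCast, pow_finRotate, Fin.cast_val_eq_self]
  simp

/-- The number of permutations of a type of cardinality `j+1` which act cyclically on the
whole type is `j!`. -/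
theorem card_cycles (j : ℕ) (hcard : Fintype.card β = j + 1) (a : β) :
    Fintype.card {c : Equiv.Perm β // c.IsCycleOn Set.univ} = j.factorial := by
  have hUcard : (Finset.univ : Finset β).card = j + 1 := by rw [card_univ, hcard]
  have hcyc : ∀ c : Equiv.Perm β, c.IsCycleOn Set.univ →
      c.IsCycleOn ((Finset.univ : Finset β) : Set β) := by
    intro c hc; rwa [coe_univ]
  -- the map to pointed equivs
  have main : Fintype.card {c : Equiv.Perm β // c.IsCycleOn Set.univ}
      = Fintype.card {e : Fin (j + 1) ≃ β // e 0 = a} := by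
    have hbij : ∀ (c : Equiv.Perm β), c.IsCycleOn Set.univ →
        Function.Bijective (fun i : Fin (j + 1) => (c ^ (i : ℕ)) a) := by
      intro c hc
      refine (Fintype.bijective_iff_injective_and_card _).mpr ⟨?_, by simp [hcard]⟩
      intro i i' h
      have := ((hcyc c hc).pow_apply_eq_pow_apply (mem_univ a)).mp h
      rw [hUcard] at this
      exact Fin.ext (by
        have h1 : (i : ℕ) % (j + 1) = (i' : ℕ) % (j + 1) := this
        rwa [Nat.mod_eq_of_lt i.isLt, Nat.mod_eq_of_lt i'.isLt] at h1)
    let F : {c : Equiv.Perm β // c.IsCycleOn Set.univ} → {e : Fin (j + 1) ≃ β // e 0 = a} :=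
      fun c => ⟨Equiv.ofBijective _ (hbij c.1 c.2), by
        simp [Equiv.ofBijective_apply]⟩
    have hF : ∀ (c : {c : Equiv.Perm β // c.IsCycleOn Set.univ}) (i : Fin (j + 1)),
        (F c).1 i = (c.1 ^ (i : ℕ)) a := fun _ _ => rfl
    refine Fintype.card_of_bijective (f := F) ⟨?_, ?_⟩
    · rintro ⟨c₁, hc₁⟩ ⟨c₂, hc₂⟩ h
      have hpt : ∀ i : Fin (j + 1), (c₁ ^ (i : ℕ)) a = (c₂ ^ (i : ℕ)) a := by
        intro i
        rw [← hF ⟨c₁, hc₁⟩ i, ← hF ⟨c₂, hc₂⟩ i, h]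
      have hptn : ∀ d : ℕ, (c₁ ^ d) a = (c₂ ^ d) a := by
        intro d
        have m1 : (c₁ ^ d) a = (c₁ ^ (d % (j + 1))) a := by
          refine ((hcyc c₁ hc₁).pow_apply_eq_pow_apply (mem_univ a)).mpr ?_
          rw [hUcard]; exact (Nat.mod_modEq d _).symm
        have m2 : (c₂ ^ d) a = (c₂ ^ (d % (j + 1))) a := by
          refine ((hcyc c₂ hc₂).pow_apply_eq_pow_apply (mem_univ a)).mpr ?_
          rw [hUcard]; exact (Nat.mod_modEq d _).symm
        rw [m1, m2]
        exact hpt ⟨d % (j + 1), Nat.mod_lt _ (Nat.succ_pos j)⟩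
      refine Subtype.ext (Equiv.ext fun x => ?_)
      obtain ⟨i, _, rfl⟩ := (hcyc c₁ hc₁).exists_pow_eq (mem_univ a) (mem_univ x)
      calc c₁ ((c₁ ^ i) a) = (c₁ ^ (i + 1)) a := by rw [pow_succ', Equiv.Perm.mul_apply]
        _ = (c₂ ^ (i + 1)) a := hptn (i + 1)
        _ = c₂ ((c₂ ^ i) a) := by rw [pow_succ', Equiv.Perm.mul_apply]
        _ = c₂ ((c₁ ^ i) a) := by rw [hptn i]
    · rintro ⟨e, he⟩
      set c : Equiv.Perm β := e.permCongr (finRotate (j + 1)) with hcdef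
      have hc : c.IsCycleOn Set.univ := by
        refine ⟨c.bijective.bijOn_univ, fun x _ y _ => ?_⟩
        obtain ⟨i, hi⟩ := (finRotate_isCycleOn j).2 (Set.mem_univ (e.symm x))
          (y := e.symm y) (Set.mem_univ _)
        refine ⟨i, ?_⟩
        show ((e.permCongr (finRotate (j + 1))) ^ i) x = y
        rw [permCongr_zpow, Equiv.permCongr_apply, hi, Equiv.apply_symm_apply]
      have hs0 : e.symm a = 0 := by rw [← he, Equiv.symm_apply_apply]
      refine ⟨⟨c, hc⟩, Subtype.ext (Equiv.ext fun i => ?_)⟩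
      rw [hF ⟨c, hc⟩ i]
      show ((e.permCongr (finRotate (j + 1))) ^ (i : ℕ)) a = e i
      rw [← zpow_natCast, permCongr_zpow, Equiv.permCongr_apply, hs0, zpow_natCast,
        pow_finRotate, zero_add, Fin.cast_val_eq_self]
  rw [main]
  have E2 : {e : Fin (j + 1) ≃ β // e 0 = a} ≃ {e : Option (Fin j) ≃ β // e none = a} := by
    refine Equiv.subtypeEquiv (Equiv.equivCongr (finSuccEquiv j) (Equiv.refl β)) (fun e => ?_)
    show ((finSuccEquiv j).symm.trans (e.trans (Equiv.refl β))) none = a ↔ e 0 = a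
    rw [Equiv.trans_apply, finSuccEquiv_symm_none, Equiv.trans_apply, Equiv.refl_apply]
  rw [Fintype.card_congr (E2.trans (Equiv.optionSubtype a))]
  have hne : Fintype.card {y : β // y ≠ a} = j := by
    have := Fintype.card_subtype_compl (fun y : β => y = a)
    rw [Fintype.card_subtype_eq, hcard] at this
    simpa using this
  obtain ⟨e⟩ := Fintype.card_eq.mp (by rw [hne, Fintype.card_fin] :
    Fintype.card (Fin j) = Fintype.card {y : β // y ≠ a})
  rw [Fintype.card_equiv e, Fintype.card_fin]

/-- The number of coprime-order permutations whose `SameCycle`-orbit of `z` is exactly `s`. -/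
theorem fiber_card (m : ℕ) (z : α) (s : Finset α) (hz : z ∈ s) (hks : Nat.Coprime s.card m) :
    Fintype.card {π : Equiv.Perm α // Nat.Coprime (orderOf π) m ∧
        Finset.univ.filter (fun x => π.SameCycle z x) = s}
      = (s.card - 1).factorial * A {x : α // x ∉ s} m := by
  classical
  set Ψ := Equiv.Perm.subtypeCongrHom (fun x : α => x ∈ s) with hΨ
  have key : ∀ (c : Equiv.Perm {x : α // x ∈ s}) (σ : Equiv.Perm {x : α // ¬ x ∈ s}) (i : ℤ),
      ((Ψ (c, σ)) ^ i) z = ((c ^ i) ⟨z, hz⟩ : {x : α // x ∈ s}) := by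
    intro c σ i
    rw [← map_zpow]
    have hpow : ((c, σ) : _ × _) ^ i = (c ^ i, σ ^ i) := rfl
    rw [hpow]
    exact Equiv.Perm.subtypeCongr.left_apply _ _ hz
  have hord : ∀ (c : Equiv.Perm {x : α // x ∈ s}) (σ : Equiv.Perm {x : α // ¬ x ∈ s}),
      orderOf (Ψ (c, σ)) = Nat.lcm (orderOf c) (orderOf σ) := by
    intro c σ
    rw [orderOf_injective Ψ (Equiv.Perm.subtypeCongrHom_injective _) (c, σ), Prod.orderOf]
  have hordc : ∀ c : Equiv.Perm {x : α // x ∈ s}, c.IsCycleOn Set.univ →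
      orderOf c ∣ s.card := by
    intro c hc
    have hc' : c.IsCycleOn ((Finset.univ : Finset {x : α // x ∈ s}) : Set _) := by
      rwa [coe_univ]
    refine orderOf_dvd_of_pow_eq_one (Equiv.ext fun y => ?_)
    have := hc'.pow_card_apply (mem_univ y)
    rwa [card_univ, Fintype.card_coe] at this
  -- the bijection
  have hGbij : Function.Bijective
      (fun p : {c : Equiv.Perm {x : α // x ∈ s} // c.IsCycleOn Set.univ} ×
          {σ : Equiv.Perm {x : α // ¬ x ∈ s} // Nat.Coprime (orderOf σ) m} =>
        (⟨Ψ (p.1.1, p.2.1), by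
          constructor
          · rw [hord]
            refine Nat.Coprime.coprime_dvd_left
              (Nat.lcm_dvd (dvd_mul_right _ _) (dvd_mul_left _ _)) ?_
            exact Nat.Coprime.mul (hks.coprime_dvd_left (hordc _ p.1.2)) p.2.2
          · ext x
            simp only [mem_filter, mem_univ, true_and]
            constructor
            · rintro ⟨i, hi⟩
              rw [key] at hi
              rw [← hi]
              exact Subtype.coe_prop _
            · intro hx
              obtain ⟨i, hi⟩ := p.1.2.2 (Set.mem_univ (⟨z, hz⟩ : {x : α // x ∈ s}))
                (y := ⟨x, hx⟩) (Set.mem_univ _)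
              exact ⟨i, by rw [key, hi]⟩⟩ :
        {π : Equiv.Perm α // Nat.Coprime (orderOf π) m ∧
          Finset.univ.filter (fun x => π.SameCycle z x) = s})) := by
    constructor
    · rintro ⟨⟨c₁, hc₁⟩, ⟨σ₁, hσ₁⟩⟩ ⟨⟨c₂, hc₂⟩, ⟨σ₂, hσ₂⟩⟩ h
      have := Equiv.Perm.subtypeCongrHom_injective (fun x : α => x ∈ s)
        (congrArg Subtype.val h)
      rw [Prod.mk.injEq] at this
      simp only [Prod.mk.injEq, Subtype.mk.injEq]
      exact this
    · rintro ⟨π, hco, horb⟩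
      have hmem : ∀ x, x ∈ s ↔ π.SameCycle z x := by
        intro x; rw [← horb]; simp
      have hinv : ∀ x, x ∈ s ↔ π x ∈ s := by
        intro x; rw [hmem, hmem, Equiv.Perm.sameCycle_apply_right]
      set c : Equiv.Perm {x : α // x ∈ s} := π.subtypePerm (fun x => (hinv x).symm) with hcdef
      set σ : Equiv.Perm {x : α // ¬ x ∈ s} := π.subtypePerm
        (fun x => not_congr (hinv x).symm) with hσdef
      have hval : Ψ (c, σ) = π := by
        refine Equiv.ext fun x => ?_
        show (c.subtypeCongr σ) x = π x
        by_cases h : x ∈ s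
        · rw [Equiv.Perm.subtypeCongr.left_apply _ _ h]; rfl
        · rw [Equiv.Perm.subtypeCongr.right_apply _ _ h]; rfl
      have hc : c.IsCycleOn Set.univ := by
        refine ⟨c.bijective.bijOn_univ, fun x _ y _ => ?_⟩
        obtain ⟨i, hi⟩ := ((hmem x).mp x.2).symm.trans ((hmem y).mp y.2)
        refine ⟨i, ?_⟩
        rw [hcdef, Equiv.Perm.subtypePerm_zpow]
        exact Subtype.ext hi
      have hσc : Nat.Coprime (orderOf σ) m := by
        refine Nat.Coprime.coprime_dvd_left ?_ hco
        rw [← hval, hord]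
        exact Nat.dvd_lcm_right _ _
      exact ⟨(⟨c, hc⟩, ⟨σ, hσc⟩), Subtype.ext hval⟩
  have hcards := Fintype.card_of_bijective hGbij
  rw [Fintype.card_prod] at hcards
  rw [← hcards]
  congr 1
  · have hs1 : 1 ≤ s.card := card_pos.mpr ⟨z, hz⟩
    have := card_cycles (β := {x : α // x ∈ s}) (s.card - 1)
      (by rw [Fintype.card_coe]; omega) ⟨z, hz⟩
    exact this
  · rw [A, ← Fintype.card_subtype]

/-- The master counting identity. -/
theorem master (m n : ℕ) (hn : Fintype.card α = n) (z : α) :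
    A α m = ∑ k ∈ (Finset.Icc 1 n).filter (fun k => Nat.Coprime k m),
      (n - 1).choose (k - 1) * ((k - 1).factorial * A (Fin (n - k)) m) := by
  classical
  set g : Equiv.Perm α → Finset α := fun π => Finset.univ.filter (fun x => π.SameCycle z x)
    with hg
  set S : Finset (Finset α) := Finset.univ.powerset.filter (fun s => z ∈ s) with hS
  have hmaps : ∀ π : Equiv.Perm α,
      π ∈ Finset.univ.filter (fun π : Equiv.Perm α => Nat.Coprime (orderOf π) m) → g π ∈ S := by
    intro π _
    simp only [hS, mem_filter, mem_powerset, subset_univ, true_and, hg, mem_univ]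
    exact ⟨0, by simp⟩
  have h1 : A α m = ∑ s ∈ S,
      ((Finset.univ.filter (fun π : Equiv.Perm α => Nat.Coprime (orderOf π) m)).filter
        (fun π => g π = s)).card := by
    rw [A]
    exact card_eq_sum_card_fiberwise hmaps
  have h2 : ∀ s ∈ S, ((Finset.univ.filter
        (fun π : Equiv.Perm α => Nat.Coprime (orderOf π) m)).filter (fun π => g π = s)).card
      = if Nat.Coprime s.card m then
          (s.card - 1).factorial * A (Fin (n - s.card)) m else 0 := by
    intro s hs
    have hzs : z ∈ s := (mem_filter.mp hs).2
    rw [filter_filter]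
    by_cases hk : Nat.Coprime s.card m
    · rw [if_pos hk, ← Fintype.card_subtype]
      have hcompl : Fintype.card {x : α // x ∉ s} = n - s.card := by
        have h1 := Fintype.card_subtype_compl (fun x : α => x ∈ s)
        rw [Fintype.card_coe, hn] at h1
        exact h1
      rw [show A (Fin (n - s.card)) m = A {x : α // x ∉ s} m from
        (A_congr (Fintype.equivFinOfCardEq hcompl) m).symm]
      exact fiber_card m z s hzs hk
    · rw [if_neg hk]
      rw [card_eq_zero, filter_eq_empty_iff]
      rintro π _ ⟨hco, horb⟩
      have hmem : ∀ x, x ∈ s ↔ π.SameCycle z x := by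
        intro x; rw [← horb]; simp [hg]
      have hIC : π.IsCycleOn (s : Set α) := by
        constructor
        · refine π.bijOn fun x => ?_
          simp only [Finset.mem_coe]
          rw [hmem, hmem, Equiv.Perm.sameCycle_apply_right]
        · intro x hx y hy
          exact ((hmem x).mp hx).symm.trans ((hmem y).mp hy)
      have hdvd : s.card ∣ orderOf π := by
        refine (hIC.pow_apply_eq hzs).mp ?_
        rw [pow_orderOf_eq_one]; rfl
      exact hk (hco.coprime_dvd_left hdvd)
  have hSmaps : ∀ s ∈ S, s.card ∈ Finset.Icc 1 n := by
    intro s hs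
    rw [mem_Icc]
    have hzs : z ∈ s := (mem_filter.mp hs).2
    constructor
    · exact card_pos.mpr ⟨z, hzs⟩
    · calc s.card ≤ (Finset.univ : Finset α).card := card_le_univ s
        _ = n := by rw [card_univ, hn]
  have hcardS : ∀ k ∈ Finset.Icc 1 n,
      (S.filter (fun s => s.card = k)).card = (n - 1).choose (k - 1) := by
    intro k hk
    rw [mem_Icc] at hk
    have hc : (Finset.univ.erase z).card = n - 1 := by
      rw [card_erase_of_mem (mem_univ z), card_univ, hn]
    rw [← hc, ← card_powersetCard (k - 1) (Finset.univ.erase z)]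
    refine Finset.card_bij' (fun s _ => s.erase z) (fun t _ => insert z t) ?_ ?_ ?_ ?_
    · intro s hs
      obtain ⟨hs1, hs2⟩ := mem_filter.mp hs
      have hzs : z ∈ s := (mem_filter.mp hs1).2
      refine mem_powersetCard.mpr ⟨erase_subset_erase z (subset_univ s), ?_⟩
      rw [card_erase_of_mem hzs, hs2]
    · intro t ht
      obtain ⟨ht1, ht2⟩ := mem_powersetCard.mp ht
      have hznot : z ∉ t := fun h => (mem_erase.mp (ht1 h)).1 rfl
      refine mem_filter.mpr ⟨mem_filter.mpr ⟨mem_powerset.mpr (subset_univ _),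
        mem_insert_self z t⟩, ?_⟩
      rw [card_insert_of_notMem hznot, ht2]
      omega
    · intro s hs
      exact insert_erase (mem_filter.mp (mem_filter.mp hs).1).2
    · intro t ht
      have hznot : z ∉ t := fun h =>
        (mem_erase.mp ((mem_powersetCard.mp ht).1 h)).1 rfl
      exact erase_insert hznot
  calc A α m = ∑ s ∈ S, (if Nat.Coprime s.card m then
        (s.card - 1).factorial * A (Fin (n - s.card)) m else 0) := by
        rw [h1]; exact Finset.sum_congr rfl h2
    _ = ∑ k ∈ Finset.Icc 1 n, ∑ s ∈ S.filter (fun s => s.card = k),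
          (if Nat.Coprime s.card m then
            (s.card - 1).factorial * A (Fin (n - s.card)) m else 0) :=
        (Finset.sum_fiberwise_of_maps_to hSmaps _).symm
    _ = ∑ k ∈ Finset.Icc 1 n, (S.filter (fun s => s.card = k)).card •
          (if Nat.Coprime k m then (k - 1).factorial * A (Fin (n - k)) m else 0) := by
        refine Finset.sum_congr rfl fun k _ => ?_
        rw [← Finset.sum_const]
        exact Finset.sum_congr rfl fun s hs => by rw [(Finset.mem_filter.mp hs).2]
    _ = ∑ k ∈ Finset.Icc 1 n, (if Nat.Coprime k m then
          (n - 1).choose (k - 1) * ((k - 1).factorial * A (Fin (n - k)) m) else 0) := by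
        refine Finset.sum_congr rfl fun k hk => ?_
        rw [hcardS k hk, smul_eq_mul, mul_ite, mul_zero]
    _ = ∑ k ∈ (Finset.Icc 1 n).filter (fun k => Nat.Coprime k m),
          (n - 1).choose (k - 1) * ((k - 1).factorial * A (Fin (n - k)) m) :=
        (Finset.sum_filter _ _).symm

end RhoAux

/-- `rho n m` is the proportion of permutations in `Sym(n)` whose order is coprime to `m`.
Note that `rho 0 m = 1`. -/
noncomputable def rho (n m : ℕ) : ℝ :=
  (Finset.univ.filter (fun π : Equiv.Perm (Fin n) => Nat.Coprime (orderOf π) m)).card /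
    (Nat.factorial n : ℝ)

theorem stmt_4 (m : ℕ) (hm : 0 < m) :
    ∀ n : ℕ, 1 ≤ n →
      (n : ℝ) * rho n m =
        ∑ k ∈ (Finset.Icc 1 n).filter (fun k => Nat.Coprime k m), rho (n - k) m := by
  intro n hn
  have hz : (0 : ℕ) < n := hn
  have hmaster := RhoAux.master m n (Fintype.card_fin n) (⟨0, hz⟩ : Fin n)
  have hA : ∀ t : ℕ, rho t m = (RhoAux.A (Fin t) m : ℝ) / (t.factorial : ℝ) := by
    intro t
    simp only [rho, RhoAux.A]
  rw [hA n, hmaster]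
  rw [Finset.sum_congr rfl (fun k (_ : k ∈ (Finset.Icc 1 n).filter
    (fun k => Nat.Coprime k m)) => hA (n - k))]
  rw [Nat.cast_sum, Finset.sum_div, Finset.mul_sum]
  refine Finset.sum_congr rfl fun k hk => ?_
  obtain ⟨hk1, _⟩ := Finset.mem_filter.mp hk
  rw [Finset.mem_Icc] at hk1
  have h1 : ((n.factorial : ℕ) : ℝ) ≠ 0 := Nat.cast_ne_zero.mpr n.factorial_ne_zero
  have h2 : (((n - k).factorial : ℕ) : ℝ) ≠ 0 := Nat.cast_ne_zero.mpr (n - k).factorial_ne_zero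
  rw [mul_div_assoc', div_eq_div_iff h1 h2]
  have c1 : (n - 1).choose (k - 1) * (k - 1).factorial * (n - k).factorial
      = (n - 1).factorial := by
    have := Nat.choose_mul_factorial_mul_factorial (show k - 1 ≤ n - 1 by omega)
    rwa [show n - 1 - (k - 1) = n - k by omega] at this
  have c2 : n * (n - 1).factorial = n.factorial := Nat.mul_factorial_pred hz.ne'
  have key : n * ((n - 1).choose (k - 1) * ((k - 1).factorial * RhoAux.A (Fin (n - k)) m))
      * (n - k).factorial = RhoAux.A (Fin (n - k)) m * n.factorial := by
    calc n * ((n - 1).choose (k - 1) * ((k - 1).factorial * RhoAux.A (Fin (n - k)) m))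
          * (n - k).factorial
        = RhoAux.A (Fin (n - k)) m *
            (n * ((n - 1).choose (k - 1) * (k - 1).factorial * (n - k).factorial)) := by ring
      _ = RhoAux.A (Fin (n - k)) m * (n * (n - 1).factorial) := by rw [c1]
      _ = RhoAux.A (Fin (n - k)) m * n.factorial := by rw [c2]
  exact_mod_cast key
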